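/- Let r ≥ 2 and n ≥ 1 be integers, let l be an integer with 0 ≤ l ≤ n, and let ε ∈ {0,1,…,r−1}^n be given by ε_i = 1 for 1 ≤ i ≤ l and ε_i = 0 for l < i ≤ n. Then the following identity holds in the ring of formal power series in t with coefficients in ℤ[q,u]: (∑_{k ≥ 0} (∑_{v ∈ L_ε(k)} ∏_{i=1}^n m'(v_i, k)) t^k) · ∏_{j=0}^{n} (1 − q^j t) = ∑_{(γ,π) ∈ G_ε} q^{maj(γ,π)} t^{des(γ,π)} u^l. -/

import Mathlib

open Finset

/-- 1-based value of `π` at position `i ∈ {1,…,n}`, with the convention `π(0) = 0`. -/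
def wval {n : ℕ} (π : Equiv.Perm (Fin n)) (i : ℕ) : ℕ :=
  if h : 1 ≤ i ∧ i ≤ n then (π ⟨i - 1, by omega⟩ : ℕ) + 1 else 0

/-- Color at position `i` (1-based), with the convention `ε_0 = 0`. -/
def wcolor {n : ℕ} (ε : Fin n → ℕ) (i : ℕ) : ℕ :=
  if h : 1 ≤ i ∧ i ≤ n then ε ⟨i - 1, by omega⟩ else 0

/-- The Biagioli–Zeng order on colored letters: `(j,c) > (k,d)`. -/
def bzGT (a b : ℕ × ℕ) : Prop :=
  (a.2 = 0 ∧ b.2 = 0 ∧ b.1 < a.1) ∨ (0 < a.2 ∧ 0 < b.2 ∧ a.1 < b.1) ∨ (a.2 = 0 ∧ 0 < b.2)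

instance (a b : ℕ × ℕ) : Decidable (bzGT a b) := by unfold bzGT; exact inferInstance

/-- The descent set `Des(ε,π) ⊆ {0,…,n-1}` of a colored permutation. -/
def DesBZ {n : ℕ} (ε : Fin n → ℕ) (π : Equiv.Perm (Fin n)) : Finset ℕ :=
  (Finset.range n).filter fun i =>
    bzGT (wval π i, wcolor ε i) (wval π (i + 1), wcolor ε (i + 1))

def desBZ {n : ℕ} (ε : Fin n → ℕ) (π : Equiv.Perm (Fin n)) : ℕ := (DesBZ ε π).card

def majBZ {n : ℕ} (ε : Fin n → ℕ) (π : Equiv.Perm (Fin n)) : ℕ := ∑ i ∈ DesBZ ε π, i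

/-- The color weight `col(ε)`. -/
def colwt {n : ℕ} (ε : Fin n → ℕ) : ℕ := ∑ i, ε i

/-- Ordinary descent set `{i ∈ {1,…,n-1} : σ(i) > σ(i+1)}` (1-based). -/
def ordDes {n : ℕ} (σ : Equiv.Perm (Fin n)) : Finset ℕ :=
  (Finset.range n).filter fun i => 1 ≤ i ∧ wval σ (i + 1) < wval σ i

noncomputable def qP : MvPolynomial (Fin 2) ℤ := MvPolynomial.X 0
noncomputable def uP : MvPolynomial (Fin 2) ℤ := MvPolynomial.X 1
noncomputable def qNat (m : ℕ) : MvPolynomial (Fin 2) ℤ := ∑ i ∈ Finset.range m, qP ^ i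
noncomputable def uNat (m : ℕ) : MvPolynomial (Fin 2) ℤ := ∑ i ∈ Finset.range m, uP ^ i

/-- The monomial `m'(j,k)`. -/
noncomputable def mPrime (j k : ℕ) : MvPolynomial (Fin 2) ℤ :=
  if j ≤ k then qP ^ j else qP ^ ((j - 1) % k) * uP ^ ((j - 1) / k)

/-- Lattice points of `cone(F_ε)` at height `k`. -/
def Lset {n : ℕ} (ε : Fin n → ℕ) (k : ℕ) : Finset (Fin n → ℕ) :=
  Fintype.piFinset fun i =>
    if 0 < ε i then Finset.Ioc (k * ε i) (k * (ε i + 1)) else Finset.Icc 0 k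

abbrev Rbz : Type := MvPolynomial (Fin 2) ℤ

def desS {n : ℕ} (σ : Equiv.Perm (Fin n)) : ℕ := (ordDes σ).card
def majS {n : ℕ} (σ : Equiv.Perm (Fin n)) : ℕ := ∑ i ∈ ordDes σ, i
def chiS {n : ℕ} (l : ℕ) (σ : Equiv.Perm (Fin n)) : ℕ :=
  if 1 ≤ wval σ 1 ∧ wval σ 1 ≤ l then 1 else 0

lemma wval_eq {n : ℕ} (σ : Equiv.Perm (Fin n)) (i : ℕ) (h1 : 1 ≤ i) (h2 : i ≤ n) :
    wval σ i = (σ ⟨i - 1, by omega⟩ : ℕ) + 1 := by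
  unfold wval; rw [dif_pos ⟨h1, h2⟩]

lemma wval_oob {n : ℕ} (σ : Equiv.Perm (Fin n)) (i : ℕ) (h : ¬ (1 ≤ i ∧ i ≤ n)) :
    wval σ i = 0 := by
  unfold wval; rw [dif_neg h]

lemma succAbove_val {d : ℕ} (m : Fin (d+1)) (x : Fin d) :
    ((m.succAbove x : Fin (d+1)) : ℕ) = if (x:ℕ) < (m:ℕ) then (x:ℕ) else (x:ℕ)+1 := by
  rw [Fin.succAbove]
  split_ifs with h1 h2 h3 <;> simp_all [Fin.lt_def]

def insP {d : ℕ} (m : Fin (d+1)) (τ : Equiv.Perm (Fin d)) : Equiv.Perm (Fin (d+1)) :=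
  (finSuccEquiv' 0).trans ((Equiv.optionCongr τ).trans (finSuccEquiv' m).symm)

lemma insP_zero {d : ℕ} (m : Fin (d+1)) (τ : Equiv.Perm (Fin d)) : insP m τ 0 = m := by
  show (finSuccEquiv' m).symm ((Equiv.optionCongr τ) ((finSuccEquiv' 0) 0)) = m
  rw [finSuccEquiv'_at]
  simp [finSuccEquiv'_symm_none]

lemma insP_succ {d : ℕ} (m : Fin (d+1)) (τ : Equiv.Perm (Fin d)) (x : Fin d) :
    insP m τ x.succ = m.succAbove (τ x) := by
  show (finSuccEquiv' m).symm ((Equiv.optionCongr τ) ((finSuccEquiv' 0) x.succ)) = _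
  have h0 : (0 : Fin (d+1)).succAbove x = x.succ := by simp
  rw [← h0, finSuccEquiv'_succAbove]
  simp [finSuccEquiv'_symm_some]

lemma insP_bijective (d : ℕ) :
    Function.Bijective (fun p : Fin (d+1) × Equiv.Perm (Fin d) => insP p.1 p.2) := by
  rw [Fintype.bijective_iff_injective_and_card]
  constructor
  · rintro ⟨m, τ⟩ ⟨m', τ'⟩ h
    simp only at h
    have hm : m = m' := by rw [← insP_zero m τ, ← insP_zero m' τ', h]
    subst hm
    have hτ : τ = τ' := by
      apply Equiv.ext
      intro x
      have h2 := congrArg (fun σ : Equiv.Perm (Fin (d+1)) => σ x.succ) h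
      simp only [insP_succ] at h2
      exact Fin.succAbove_right_injective h2
    rw [hτ]
  · simp [Fintype.card_perm, Fintype.card_fin, Nat.factorial_succ]

lemma wval_insP_one {d : ℕ} (m : Fin (d+1)) (τ : Equiv.Perm (Fin d)) :
    wval (insP m τ) 1 = (m : ℕ) + 1 := by
  rw [wval_eq _ 1 le_rfl (by omega)]
  have h : (⟨1 - 1, by omega⟩ : Fin (d+1)) = 0 := rfl
  rw [h, insP_zero]

lemma wval_insP_succ {d : ℕ} (m : Fin (d+1)) (τ : Equiv.Perm (Fin d)) (i : ℕ)
    (h1 : 1 ≤ i) (h2 : i ≤ d) :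
    wval (insP m τ) (i+1) = (m.succAbove (τ ⟨i-1, by omega⟩) : ℕ) + 1 := by
  rw [wval_eq _ (i+1) (by omega) (by omega)]
  have hx : (⟨i+1-1, by omega⟩ : Fin (d+1)) = (⟨i-1, by omega⟩ : Fin d).succ := by
    apply Fin.ext; simp [Fin.succ]; omega
  rw [hx, insP_succ]

lemma wval_eq' {n : ℕ} (σ : Equiv.Perm (Fin n)) (i : ℕ) (h : i < n) :
    wval σ (i+1) = (σ ⟨i, h⟩ : ℕ) + 1 := by
  rw [wval_eq σ (i+1) (by omega) (by omega)]
  rfl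

lemma wval_insP_two {d : ℕ} (m : Fin (d+1)) (τ : Equiv.Perm (Fin d)) (i : ℕ) (h : i < d) :
    wval (insP m τ) (i+2) = (m.succAbove (τ ⟨i, h⟩) : ℕ) + 1 := by
  rw [wval_eq' (insP m τ) (i+1) (by omega)]
  have hx : (⟨i+1, by omega⟩ : Fin (d+1)) = (⟨i, h⟩ : Fin d).succ := rfl
  rw [hx, insP_succ]

lemma chiS_cases {n : ℕ} (l : ℕ) (σ : Equiv.Perm (Fin n)) :
    chiS l σ = 0 ∨ chiS l σ = 1 := by unfold chiS; split <;> simp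

lemma chiS_eq_one_iff {n : ℕ} (l : ℕ) (σ : Equiv.Perm (Fin n)) :
    chiS l σ = 1 ↔ (1 ≤ wval σ 1 ∧ wval σ 1 ≤ l) := by unfold chiS; split <;> simp_all

lemma mem_ordDes {n : ℕ} (σ : Equiv.Perm (Fin n)) (i : ℕ) :
    i ∈ ordDes σ ↔ i < n ∧ 1 ≤ i ∧ wval σ (i+1) < wval σ i := by
  simp [ordDes, Finset.mem_filter, Finset.mem_range, and_assoc]

lemma ordDes_insP {d : ℕ} (m : Fin (d+1)) (τ : Equiv.Perm (Fin d)) :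
    ordDes (insP m τ) =
      (if chiS (m : ℕ) τ = 1 then {1} else ∅) ∪ (ordDes τ).image (· + 1) := by
  ext i
  rw [Finset.mem_union, Finset.mem_image, mem_ordDes]
  have hmem1 : (i ∈ (if chiS (m : ℕ) τ = 1 then ({1} : Finset ℕ) else ∅)) ↔
      (chiS (m:ℕ) τ = 1 ∧ i = 1) := by
    split <;> simp_all
  rw [hmem1]
  match i with
  | 0 =>
    constructor
    · rintro ⟨-, h, -⟩; exact absurd h (by omega)
    · rintro (⟨-, h⟩ | ⟨x, hx, hx1⟩)
      · omega
      · have := (mem_ordDes τ x).mp hx; omega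
  | 1 =>
    rcases Nat.eq_zero_or_pos d with rfl | hd
    · constructor
      · rintro ⟨h, -, -⟩; omega
      · rintro (⟨h, -⟩ | ⟨x, hx, hx1⟩)
        · rw [chiS_eq_one_iff] at h
          rw [wval_oob τ 1 (by omega)] at h; omega
        · have := (mem_ordDes τ x).mp hx; omega
    · have hv1 : wval (insP m τ) 1 = (m:ℕ)+1 := wval_insP_one m τ
      have hv2 : wval (insP m τ) (1+1) = (m.succAbove (τ ⟨0, hd⟩) : ℕ) + 1 :=
        wval_insP_two m τ 0 hd
      have hsa := succAbove_val m (τ ⟨0, hd⟩)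
      have hτ1 : wval τ 1 = (τ ⟨0, hd⟩ : ℕ) + 1 := wval_eq' τ 0 hd
      constructor
      · rintro ⟨-, -, h⟩
        left
        refine ⟨(chiS_eq_one_iff _ _).mpr ?_, rfl⟩
        rw [hv1, hv2] at h
        rw [hτ1]
        split at hsa <;> omega
      · rintro (⟨h, -⟩ | ⟨x, hx, hx1⟩)
        · rw [chiS_eq_one_iff, hτ1] at h
          refine ⟨by omega, le_rfl, ?_⟩
          rw [hv1, hv2]
          split at hsa <;> omega
        · have := (mem_ordDes τ x).mp hx; omega
  | (j+2) =>
    constructor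
    · rintro ⟨hlt, -, h⟩
      right
      have hj1 : j + 1 < d := by omega
      have hv2 : wval (insP m τ) (j+2) = (m.succAbove (τ ⟨j, by omega⟩) : ℕ) + 1 :=
        wval_insP_two m τ j (by omega)
      have hv3 : wval (insP m τ) (j+1+2) = (m.succAbove (τ ⟨j+1, hj1⟩) : ℕ) + 1 :=
        wval_insP_two m τ (j+1) hj1
      have h' : wval (insP m τ) (j+1+2) < wval (insP m τ) (j+2) := h
      rw [hv2, hv3] at h'
      have hsa1 := succAbove_val m (τ ⟨j, by omega⟩)
      have hsa2 := succAbove_val m (τ ⟨j+1, hj1⟩)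
      refine ⟨j+1, (mem_ordDes τ (j+1)).mpr ⟨hj1, by omega, ?_⟩, by omega⟩
      have e1 : wval τ (j+1+1) = (τ ⟨j+1, hj1⟩ : ℕ) + 1 := wval_eq' τ (j+1) hj1
      have e2 : wval τ (j+1) = (τ ⟨j, by omega⟩ : ℕ) + 1 := wval_eq' τ j (by omega)
      rw [e1, e2]
      split at hsa1 <;> split at hsa2 <;> omega
    · rintro (⟨-, he⟩ | ⟨x, hx, hx1⟩)
      · omega
      · have hxj : x = j+1 := by omega
        subst hxj
        obtain ⟨hj1, -, hx3⟩ := (mem_ordDes τ (j+1)).mp hx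
        have hv2 : wval (insP m τ) (j+2) = (m.succAbove (τ ⟨j, by omega⟩) : ℕ) + 1 :=
          wval_insP_two m τ j (by omega)
        have hv3 : wval (insP m τ) (j+1+2) = (m.succAbove (τ ⟨j+1, hj1⟩) : ℕ) + 1 :=
          wval_insP_two m τ (j+1) hj1
        have e1 : wval τ (j+1+1) = (τ ⟨j+1, hj1⟩ : ℕ) + 1 := wval_eq' τ (j+1) hj1
        have e2 : wval τ (j+1) = (τ ⟨j, by omega⟩ : ℕ) + 1 := wval_eq' τ j (by omega)
        rw [e1, e2] at hx3
        have hsa1 := succAbove_val m (τ ⟨j, by omega⟩)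
        have hsa2 := succAbove_val m (τ ⟨j+1, hj1⟩)
        refine ⟨by omega, by omega, ?_⟩
        show wval (insP m τ) (j+2+1) < wval (insP m τ) (j+2)
        have hv3' : wval (insP m τ) (j+2+1) = (m.succAbove (τ ⟨j+1, hj1⟩) : ℕ) + 1 := hv3
        rw [hv2, hv3']
        split at hsa1 <;> split at hsa2 <;> omega

lemma disj_insP {d : ℕ} (m : Fin (d+1)) (τ : Equiv.Perm (Fin d)) :
    Disjoint (if chiS (m:ℕ) τ = 1 then ({1}:Finset ℕ) else ∅) ((ordDes τ).image (· + 1)) := by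
  rw [Finset.disjoint_left]
  intro a ha hb
  rw [Finset.mem_image] at hb
  obtain ⟨x, hx, rfl⟩ := hb
  have := (mem_ordDes τ x).mp hx
  split at ha
  · rw [Finset.mem_singleton] at ha; omega
  · exact absurd ha (Finset.notMem_empty _)

lemma majS_insP {d : ℕ} (m : Fin (d+1)) (τ : Equiv.Perm (Fin d)) :
    majS (insP m τ) = majS τ + desS τ + chiS (m:ℕ) τ := by
  rw [majS, ordDes_insP, Finset.sum_union (disj_insP m τ),
    Finset.sum_image (by intro x _ y _ h; have h' : x + 1 = y + 1 := h; omega)]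
  have h1 : ∑ x ∈ ordDes τ, (x+1) = majS τ + desS τ := by
    rw [Finset.sum_add_distrib, Finset.sum_const, smul_eq_mul, mul_one]; rfl
  rw [h1]
  rcases chiS_cases (m:ℕ) τ with h | h <;> rw [h] <;> simp <;> omega

lemma desS_insP {d : ℕ} (m : Fin (d+1)) (τ : Equiv.Perm (Fin d)) :
    desS (insP m τ) = desS τ + chiS (m:ℕ) τ := by
  rw [desS, ordDes_insP, Finset.card_union_of_disjoint (disj_insP m τ),
    Finset.card_image_of_injective _ (fun x y h => by omega)]
  rcases chiS_cases (m:ℕ) τ with h | h <;> rw [h] <;> simp [desS] <;> omega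

lemma chiS_insP {d : ℕ} (l : ℕ) (m : Fin (d+1)) (τ : Equiv.Perm (Fin d)) :
    chiS l (insP m τ) = if (m:ℕ) + 1 ≤ l then 1 else 0 := by
  unfold chiS
  rw [wval_insP_one]
  congr 1
  simp only [eq_iff_iff]
  omega

noncomputable def Gs (a b : ℕ) : PowerSeries Rbz :=
  PowerSeries.mk fun k => qNat k ^ a * qNat (k+1) ^ b

noncomputable def Ps (n : ℕ) : PowerSeries Rbz :=
  ∏ j ∈ Finset.range (n+1), (1 - PowerSeries.C (R := Rbz) (qP ^ j) * PowerSeries.X)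

noncomputable def Qs (n l : ℕ) : PowerSeries Rbz :=
  ∑ σ : Equiv.Perm (Fin n),
    PowerSeries.C (R := Rbz) (qP ^ majS σ) * PowerSeries.X ^ (desS σ + chiS l σ)

lemma rescale_C' (a c : Rbz) :
    PowerSeries.rescale a (PowerSeries.C (R := Rbz) c) = PowerSeries.C (R := Rbz) c := by
  apply PowerSeries.ext; intro n
  rw [PowerSeries.coeff_rescale, PowerSeries.coeff_C]
  split
  · rename_i h; subst h; rw [pow_zero, one_mul]
  · rw [mul_zero]

lemma rescale_X' (a : Rbz) :
    PowerSeries.rescale a PowerSeries.X = PowerSeries.C (R := Rbz) a * PowerSeries.X := by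
  apply PowerSeries.ext; intro n
  rw [PowerSeries.coeff_rescale, PowerSeries.coeff_C_mul, PowerSeries.coeff_X]
  split
  · rename_i h; subst h; simp
  · rw [mul_zero, mul_zero]

lemma rescale_CXpow (s : Rbz) (e : ℕ) :
    PowerSeries.rescale qP (PowerSeries.C (R := Rbz) s * PowerSeries.X ^ e) =
      PowerSeries.C (R := Rbz) (s * qP ^ e) * PowerSeries.X ^ e := by
  rw [map_mul, map_pow, rescale_C', rescale_X', mul_pow, ← map_pow, map_mul]
  ring

lemma Ps_succ (n : ℕ) : Ps (n+1) = (1 - PowerSeries.X) * PowerSeries.rescale qP (Ps n) := by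
  rw [Ps, Finset.prod_range_succ']
  have h0 : (1 : PowerSeries Rbz) - PowerSeries.C (R := Rbz) (qP ^ 0) * PowerSeries.X
      = 1 - PowerSeries.X := by
    rw [pow_zero, map_one, one_mul]
  rw [h0, Ps, map_prod]
  have h1 : ∀ j, PowerSeries.rescale qP
      (1 - PowerSeries.C (R := Rbz) (qP ^ j) * PowerSeries.X)
      = 1 - PowerSeries.C (R := Rbz) (qP ^ (j+1)) * PowerSeries.X := by
    intro j
    rw [map_sub, map_one, map_mul, rescale_C', rescale_X', pow_succ, map_mul]
    ring
  rw [Finset.prod_congr rfl fun j _ => h1 j]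
  ring

lemma qNat_succ (k : ℕ) : qNat (k+1) = qNat k + qP ^ k := Finset.sum_range_succ _ k

lemma Gs_step (a b : ℕ) :
    Gs (a+1) b = Gs a (b+1) - PowerSeries.rescale qP (Gs a b) := by
  apply PowerSeries.ext; intro k
  rw [map_sub, PowerSeries.coeff_rescale]
  simp only [Gs, PowerSeries.coeff_mk]
  rw [qNat_succ]
  ring

lemma X_mul_Gs (d : ℕ) :
    PowerSeries.X * Gs 0 (d+1) = PowerSeries.mk fun k => qNat k ^ (d+1) := by
  apply PowerSeries.ext; intro k
  cases k with
  | zero => simp [qNat, PowerSeries.coeff_mk]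
  | succ k =>
    rw [PowerSeries.coeff_succ_X_mul, Gs, PowerSeries.coeff_mk, PowerSeries.coeff_mk]
    simp

lemma rescale_sum_Gs (d : ℕ) :
    PowerSeries.rescale qP (∑ m ∈ Finset.range (d+1), Gs m (d - m)) =
      (1 - PowerSeries.X) * Gs 0 (d+1) := by
  rw [sub_mul, one_mul, X_mul_Gs]
  apply PowerSeries.ext; intro k
  rw [PowerSeries.coeff_rescale, map_sub, map_sum]
  simp only [Gs, PowerSeries.coeff_mk]
  have hg : (∑ i ∈ Finset.range (d+1), qNat k ^ i * qNat (k+1) ^ (d - i)) *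
      (qNat k - qNat (k+1)) = qNat k ^ (d+1) - qNat (k+1) ^ (d+1) :=
    geom_sum₂_mul (qNat k) (qNat (k+1)) (d+1)
  have hq : qNat k - qNat (k+1) = -(qP ^ k) := by rw [qNat_succ]; ring
  rw [hq] at hg
  linear_combination -hg

lemma base_case : Gs 0 0 * Ps 0 = 1 := by
  have h1 : Ps 0 = 1 - PowerSeries.X := by
    rw [Ps, Finset.prod_range_one, pow_zero, map_one, one_mul]
  rw [h1, mul_sub, mul_one, mul_comm]
  apply PowerSeries.ext; intro k
  rw [map_sub]
  cases k with
  | zero =>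
    rw [PowerSeries.coeff_zero_eq_constantCoeff, map_mul]
    simp [Gs, PowerSeries.constantCoeff_X, PowerSeries.coeff_zero_eq_constantCoeff,
      PowerSeries.constantCoeff_mk]
  | succ k =>
    rw [PowerSeries.coeff_succ_X_mul]
    simp [Gs, PowerSeries.coeff_mk, PowerSeries.coeff_one]

lemma Qs_zero : Qs 0 0 = 1 := by
  rw [Qs]
  have h : ∀ σ : Equiv.Perm (Fin 0),
      PowerSeries.C (R := Rbz) (qP ^ majS σ) * PowerSeries.X ^ (desS σ + chiS 0 σ)
        = (1 : PowerSeries Rbz) := by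
    intro σ
    have h1 : ordDes σ = ∅ := by simp [ordDes]
    have h2 : chiS 0 σ = 0 := by
      unfold chiS; rw [wval_oob σ 1 (by omega)]; simp
    rw [majS, desS, h1, h2]
    simp
  rw [Finset.sum_congr rfl fun σ _ => h σ, Finset.sum_const]
  simp [Finset.card_univ, Fintype.card_perm]

lemma Qs_succ (d l : ℕ) :
    Qs (d+1) l = ∑ m : Fin (d+1), ∑ τ : Equiv.Perm (Fin d),
      PowerSeries.C (R := Rbz) (qP ^ (majS τ + desS τ + chiS (m:ℕ) τ)) *
        PowerSeries.X ^ ((desS τ + chiS (m:ℕ) τ) + (if (m:ℕ) + 1 ≤ l then 1 else 0)) := by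
  rw [Qs]
  have e1 : ∑ σ : Equiv.Perm (Fin (d+1)),
      PowerSeries.C (R := Rbz) (qP ^ majS σ) * PowerSeries.X ^ (desS σ + chiS l σ)
      = ∑ p : Fin (d+1) × Equiv.Perm (Fin d),
          PowerSeries.C (R := Rbz) (qP ^ majS (insP p.1 p.2)) *
            PowerSeries.X ^ (desS (insP p.1 p.2) + chiS l (insP p.1 p.2)) :=
    (Fintype.sum_bijective _ (insP_bijective d) _ _ fun p => rfl).symm
  have e2 : ∑ p : Fin (d+1) × Equiv.Perm (Fin d),
      PowerSeries.C (R := Rbz) (qP ^ majS (insP p.1 p.2)) *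
        PowerSeries.X ^ (desS (insP p.1 p.2) + chiS l (insP p.1 p.2))
      = ∑ m : Fin (d+1), ∑ τ : Equiv.Perm (Fin d),
          PowerSeries.C (R := Rbz) (qP ^ majS (insP m τ)) *
            PowerSeries.X ^ (desS (insP m τ) + chiS l (insP m τ)) :=
    Fintype.sum_prod_type _
  rw [e1, e2]
  refine Finset.sum_congr rfl fun m _ => Finset.sum_congr rfl fun τ _ => ?_
  rw [majS_insP, desS_insP, chiS_insP]

lemma Qs_zero_succ (d : ℕ) :
    Qs (d+1) 0 = ∑ m ∈ Finset.range (d+1), PowerSeries.rescale qP (Qs d m) := by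
  rw [Qs_succ, ← Fin.sum_univ_eq_sum_range (fun m => PowerSeries.rescale qP (Qs d m)) (d+1)]
  refine Finset.sum_congr rfl fun m _ => ?_
  rw [Qs, map_sum]
  refine Finset.sum_congr rfl fun τ _ => ?_
  rw [rescale_CXpow]
  have h0 : (if (m:ℕ) + 1 ≤ 0 then (1:ℕ) else 0) = 0 := if_neg (by omega)
  rw [h0, add_zero]
  congr 1
  rw [← pow_add, add_assoc]

lemma Qs_step (d l : ℕ) (hl : l ≤ d) :
    Qs (d+1) (l+1) = Qs (d+1) l +
      (PowerSeries.X - 1) * PowerSeries.rescale qP (Qs d l) := by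
  have key : Qs (d+1) (l+1) - Qs (d+1) l =
      (PowerSeries.X - 1) * PowerSeries.rescale qP (Qs d l) := by
    rw [Qs_succ d (l+1), Qs_succ d l, ← Finset.sum_sub_distrib]
    have hswap : ∀ m : Fin (d+1),
        (∑ τ : Equiv.Perm (Fin d),
          PowerSeries.C (R := Rbz) (qP ^ (majS τ + desS τ + chiS (m:ℕ) τ)) *
            PowerSeries.X ^ ((desS τ + chiS (m:ℕ) τ) + (if (m:ℕ) + 1 ≤ l + 1 then 1 else 0)))
        - (∑ τ : Equiv.Perm (Fin d),
          PowerSeries.C (R := Rbz) (qP ^ (majS τ + desS τ + chiS (m:ℕ) τ)) *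
            PowerSeries.X ^ ((desS τ + chiS (m:ℕ) τ) + (if (m:ℕ) + 1 ≤ l then 1 else 0)))
        = if m = (⟨l, by omega⟩ : Fin (d+1)) then
            ∑ τ : Equiv.Perm (Fin d),
              (PowerSeries.C (R := Rbz) (qP ^ (majS τ + desS τ + chiS l τ)) *
                 PowerSeries.X ^ ((desS τ + chiS l τ) + 1)
               - PowerSeries.C (R := Rbz) (qP ^ (majS τ + desS τ + chiS l τ)) *
                 PowerSeries.X ^ (desS τ + chiS l τ))
          else 0 := by
      intro m
      rcases lt_trichotomy ((m:ℕ)) l with h | h | h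
      · have e1 : (if (m:ℕ)+1 ≤ l+1 then (1:ℕ) else 0) = 1 := if_pos (by omega)
        have e2 : (if (m:ℕ)+1 ≤ l then (1:ℕ) else 0) = 1 := if_pos (by omega)
        have hmne : m ≠ (⟨l, by omega⟩ : Fin (d+1)) := by
          intro hc; rw [hc] at h; simp at h
        rw [e1, e2, if_neg hmne, ← Finset.sum_sub_distrib]
        exact Finset.sum_eq_zero fun τ _ => sub_self _
      · have e1 : (if (m:ℕ)+1 ≤ l+1 then (1:ℕ) else 0) = 1 := if_pos (by omega)
        have e2 : (if (m:ℕ)+1 ≤ l then (1:ℕ) else 0) = 0 := if_neg (by omega)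
        have hme : m = (⟨l, by omega⟩ : Fin (d+1)) := Fin.ext (by simpa using h)
        rw [e1, e2, if_pos hme, ← Finset.sum_sub_distrib]
        refine Finset.sum_congr rfl fun τ _ => ?_
        rw [add_zero, h]
      · have e1 : (if (m:ℕ)+1 ≤ l+1 then (1:ℕ) else 0) = 0 := if_neg (by omega)
        have e2 : (if (m:ℕ)+1 ≤ l then (1:ℕ) else 0) = 0 := if_neg (by omega)
        have hmne : m ≠ (⟨l, by omega⟩ : Fin (d+1)) := by
          intro hc; rw [hc] at h; simp at h
        rw [e1, e2, if_neg hmne, ← Finset.sum_sub_distrib]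
        exact Finset.sum_eq_zero fun τ _ => sub_self _
    rw [Finset.sum_congr rfl fun m _ => hswap m]
    rw [Finset.sum_ite_eq' Finset.univ (⟨l, by omega⟩ : Fin (d+1))]
    rw [if_pos (Finset.mem_univ _)]
    rw [Qs, map_sum, Finset.mul_sum]
    refine Finset.sum_congr rfl fun τ _ => ?_
    rw [rescale_CXpow, ← pow_add, ← add_assoc]
    ring
  rw [← key]; ring

lemma main_identity : ∀ N a b : ℕ, a + b = N → Gs a b * Ps N = Qs N a := by
  intro N
  induction N using Nat.strong_induction_on with
  | _ N IH =>
    intro a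
    induction a with
    | zero =>
      intro b hab
      cases N with
      | zero =>
        have hb : b = 0 := by omega
        subst hb
        rw [base_case, Qs_zero]
      | succ d =>
        have hb : b = d + 1 := by omega
        subst hb
        rw [Qs_zero_succ]
        have h1 : ∀ m ∈ Finset.range (d+1),
            PowerSeries.rescale qP (Qs d m)
              = PowerSeries.rescale qP (Gs m (d - m) * Ps d) := by
          intro m hm
          rw [IH d (by omega) m (d - m) (by rw [Finset.mem_range] at hm; omega)]
        rw [Finset.sum_congr rfl h1]
        have h2 : ∀ m ∈ Finset.range (d+1),
            PowerSeries.rescale qP (Gs m (d - m) * Ps d)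
              = PowerSeries.rescale qP (Gs m (d - m)) * PowerSeries.rescale qP (Ps d) := by
          intro m _; rw [map_mul]
        rw [Finset.sum_congr rfl h2, ← Finset.sum_mul, ← map_sum, rescale_sum_Gs,
          Ps_succ]
        ring
    | succ a ih =>
      intro b hab
      obtain ⟨d, rfl⟩ : ∃ d, N = d + 1 := ⟨a + b, by omega⟩
      have h1 : Gs a (b+1) * Ps (d+1) = Qs (d+1) a := ih (b+1) (by omega)
      have h2 : Gs a b * Ps d = Qs d a := IH d (by omega) a b (by omega)
      rw [Gs_step, sub_mul, h1, Qs_step d a (by omega), Ps_succ, ← h2, map_mul]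
      ring

/-! ### Part 1: coefficient computation -/

lemma sum_Icc_mPrime (k : ℕ) : ∑ j ∈ Finset.Icc 0 k, mPrime j k = qNat (k+1) := by
  have hI : Finset.Icc 0 k = Finset.range (k+1) := by
    ext j; simp [Nat.lt_succ_iff]
  rw [hI, qNat]
  refine Finset.sum_congr rfl fun j hj => ?_
  rw [Finset.mem_range] at hj
  rw [mPrime, if_pos (by omega)]

lemma sum_Ioc_mPrime (k : ℕ) :
    ∑ j ∈ Finset.Ioc (k * 1) (k * (1 + 1)), mPrime j k = uP * qNat k := by
  rcases Nat.eq_zero_or_pos k with rfl | hk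
  · simp [qNat]
  · have hmap : Finset.Ioc (k * 1) (k * (1 + 1)) =
        (Finset.range k).map ⟨fun i => k + 1 + i, fun a b hab => by
          have hab' : k + 1 + a = k + 1 + b := hab
          omega⟩ := by
      ext j
      simp only [Finset.mem_Ioc, Finset.mem_map, Finset.mem_range,
        Function.Embedding.coeFn_mk]
      constructor
      · rintro ⟨h1, h2⟩; exact ⟨j - (k+1), by omega, by show k + 1 + (j - (k+1)) = j; omega⟩
      · rintro ⟨a, ha, rfl⟩
        show k * 1 < k + 1 + a ∧ k + 1 + a ≤ k * (1 + 1)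
        omega
    rw [hmap, Finset.sum_map]
    change ∑ i ∈ Finset.range k, mPrime (k + 1 + i) k = uP * qNat k
    rw [qNat, Finset.mul_sum]
    refine Finset.sum_congr rfl fun i hi => ?_
    rw [Finset.mem_range] at hi
    rw [mPrime, if_neg (by omega)]
    have h1 : k + 1 + i - 1 = i + k := by omega
    rw [h1, Nat.add_mod_right, Nat.mod_eq_of_lt hi, Nat.add_div_right i hk,
      Nat.div_eq_of_lt hi]
    ring

lemma card_filter_lt (n l : ℕ) (hl : l ≤ n) :
    (Finset.univ.filter fun i : Fin n => (i:ℕ) < l).card = l := by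
  have he : (Finset.univ.filter fun i : Fin n => (i:ℕ) < l) =
      (Finset.range l).attachFin (fun m hm => lt_of_lt_of_le (Finset.mem_range.mp hm) hl) := by
    ext i
    simp [Finset.mem_attachFin]
  rw [he, Finset.card_attachFin]
  exact Finset.card_range l

lemma coeff_lemma (n l : ℕ) (hl : l ≤ n) (ε : Fin n → ℕ)
    (hε : ∀ i : Fin n, ε i = if (i : ℕ) < l then 1 else 0) (k : ℕ) :
    ∑ v ∈ Lset ε k, ∏ i, mPrime (v i) k
      = uP ^ l * (qNat k ^ l * qNat (k+1) ^ (n - l)) := by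
  have hps : (∏ i : Fin n, ∑ j ∈ (if 0 < ε i then Finset.Ioc (k * ε i) (k * (ε i + 1))
        else Finset.Icc 0 k), mPrime j k)
      = ∑ v ∈ (Fintype.piFinset fun i : Fin n =>
          if 0 < ε i then Finset.Ioc (k * ε i) (k * (ε i + 1)) else Finset.Icc 0 k),
          ∏ i : Fin n, mPrime (v i) k :=
    Finset.prod_univ_sum _ _
  rw [Lset, ← hps]
  have h1 : ∀ i : Fin n,
      (∑ j ∈ (if 0 < ε i then Finset.Ioc (k * ε i) (k * (ε i + 1)) else Finset.Icc 0 k),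
        mPrime j k)
      = if (i:ℕ) < l then uP * qNat k else qNat (k+1) := by
    intro i
    rw [hε i]
    by_cases hi : (i:ℕ) < l
    · rw [if_pos hi, if_pos hi, if_pos (by omega)]
      exact sum_Ioc_mPrime k
    · rw [if_neg hi, if_neg hi, if_neg (by omega)]
      exact sum_Icc_mPrime k
  rw [Finset.prod_congr rfl fun i _ => h1 i, Finset.prod_ite, Finset.prod_const,
    Finset.prod_const, card_filter_lt n l hl]
  have h2 : (Finset.univ.filter fun i : Fin n => ¬ (i:ℕ) < l).card = n - l := by
    have h3 := Finset.card_filter_add_card_filter_not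
      (s := (Finset.univ : Finset (Fin n))) (p := fun i : Fin n => (i:ℕ) < l)
    rw [Finset.card_univ, Fintype.card_fin, card_filter_lt n l hl] at h3
    omega
  rw [h2, mul_pow]
  ring

/-! ### Part 2: translation of the statistics -/

lemma bz_iff (l A B : ℕ) :
    bzGT (A+1, if A < l then 1 else 0) (B+1, if B < l then 1 else 0) ↔
      ((if B < l then l - 1 - B else B) + 1 < (if A < l then l - 1 - A else A) + 1) := by
  unfold bzGT
  dsimp only
  split_ifs <;> simp <;> omega

lemma bz0_iff (l B : ℕ) :
    bzGT (0, 0) (B+1, if B < l then 1 else 0) ↔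
      ((if B < l then l - 1 - B else B) + 1 ≤ l) := by
  unfold bzGT
  dsimp only
  split_ifs <;> simp <;> omega

def rhoFun (n l : ℕ) (j : Fin n) : Fin n :=
  if h : (j:ℕ) < l ∧ l ≤ n then ⟨l - 1 - (j:ℕ), by omega⟩ else j

lemma rhoFun_invol (n l : ℕ) : Function.Involutive (rhoFun n l) := by
  intro j
  by_cases h : (j:ℕ) < l ∧ l ≤ n
  · have h1 : rhoFun n l j = ⟨l - 1 - (j:ℕ), by omega⟩ := dif_pos h
    rw [h1]
    have h2 : rhoFun n l ⟨l - 1 - (j:ℕ), by omega⟩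
        = ⟨l - 1 - (l - 1 - (j:ℕ)), by omega⟩ :=
      dif_pos ⟨(by omega : l - 1 - (j:ℕ) < l), h.2⟩
    rw [h2]
    apply Fin.ext
    show l - 1 - (l - 1 - (j:ℕ)) = (j:ℕ)
    omega
  · have h1 : rhoFun n l j = j := dif_neg h
    rw [h1, h1]

def rhoP {n : ℕ} (l : ℕ) : Equiv.Perm (Fin n) :=
  Function.Involutive.toPerm (rhoFun n l) (rhoFun_invol n l)

lemma rhoP_val {n : ℕ} (l : ℕ) (hl : l ≤ n) (j : Fin n) :
    ((rhoP l j : Fin n) : ℕ) = if (j:ℕ) < l then l - 1 - (j:ℕ) else (j:ℕ) := by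
  have hc : rhoP (n := n) l j = rhoFun n l j := rfl
  rw [hc]
  by_cases hj : (j:ℕ) < l
  · have h1 : rhoFun n l j = ⟨l - 1 - (j:ℕ), by omega⟩ := dif_pos ⟨hj, hl⟩
    rw [h1, if_pos hj]
  · have h1 : rhoFun n l j = j := dif_neg (by omega)
    rw [h1, if_neg hj]

lemma wcolor_eq' {n : ℕ} (ε' : Fin n → ℕ) (j : ℕ) (h : j < n) :
    wcolor ε' (j+1) = ε' ⟨j, h⟩ := by
  unfold wcolor
  rw [dif_pos ⟨by omega, by omega⟩]
  rfl

lemma bz_desSet {n : ℕ} (l : ℕ) (hn : 1 ≤ n) (hl : l ≤ n) (ε : Fin n → ℕ)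
    (hε : ∀ i : Fin n, ε i = if (i : ℕ) < l then 1 else 0) (π : Equiv.Perm (Fin n)) :
    DesBZ (fun i => ε (π i)) π =
      (if chiS l (rhoP l * π) = 1 then {0} else ∅) ∪ ordDes (rhoP l * π) := by
  set σ := rhoP l * π with hσdef
  have hσv : ∀ x : Fin n, (σ x : ℕ) =
      if ((π x : Fin n) : ℕ) < l then l - 1 - ((π x : Fin n) : ℕ) else ((π x : Fin n) : ℕ) := by
    intro x
    rw [hσdef, Equiv.Perm.mul_apply, rhoP_val l hl]
  have hcol : ∀ (j : ℕ) (h : j < n),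
      wcolor (fun i => ε (π i)) (j+1) = if ((π ⟨j, h⟩ : Fin n) : ℕ) < l then 1 else 0 := by
    intro j h
    rw [wcolor_eq' _ j h]
    exact hε (π ⟨j, h⟩)
  have hmain : ∀ j : ℕ, j + 1 < n →
      (bzGT (wval π (j+1), wcolor (fun i => ε (π i)) (j+1))
          (wval π (j+1+1), wcolor (fun i => ε (π i)) (j+1+1)) ↔
        wval σ (j+1+1) < wval σ (j+1)) := by
    intro j hj
    rw [wval_eq' π j (by omega), wval_eq' π (j+1) hj, hcol j (by omega), hcol (j+1) hj,
      wval_eq' σ j (by omega), wval_eq' σ (j+1) hj, hσv ⟨j, by omega⟩, hσv ⟨j+1, hj⟩]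
    exact bz_iff l _ _
  have hzero :
      (bzGT (wval π 0, wcolor (fun i => ε (π i)) 0)
          (wval π (0+1), wcolor (fun i => ε (π i)) (0+1)) ↔
        (1 ≤ wval σ 1 ∧ wval σ 1 ≤ l)) := by
    have hw0 : wval π 0 = 0 := wval_oob π 0 (by omega)
    have hc0 : wcolor (fun i => ε (π i)) 0 = 0 := by
      unfold wcolor; rw [dif_neg (by omega)]
    rw [hw0, hc0, wval_eq' π 0 (by omega), hcol 0 (by omega),
      wval_eq' σ 0 (by omega), hσv ⟨0, by omega⟩]
    rw [bz0_iff l _]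
    omega
  ext i
  rw [Finset.mem_union, DesBZ, Finset.mem_filter, Finset.mem_range]
  have hmem1 : (i ∈ (if chiS l σ = 1 then ({0} : Finset ℕ) else ∅)) ↔
      (chiS l σ = 1 ∧ i = 0) := by
    split <;> simp_all
  rw [hmem1, mem_ordDes, chiS_eq_one_iff]
  match i with
  | 0 =>
    constructor
    · rintro ⟨-, hbz⟩
      exact Or.inl ⟨hzero.mp hbz, rfl⟩
    · rintro (⟨hchi, -⟩ | ⟨-, h1, -⟩)
      · exact ⟨by omega, hzero.mpr hchi⟩
      · omega
  | (j+1) =>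
    constructor
    · rintro ⟨hlt, hbz⟩
      exact Or.inr ⟨hlt, by omega, (hmain j hlt).mp hbz⟩
    · rintro (⟨-, he⟩ | ⟨hj, -, hlt⟩)
      · omega
      · exact ⟨hj, (hmain j hj).mpr hlt⟩

lemma bz_stats {n : ℕ} (l : ℕ) (hn : 1 ≤ n) (hl : l ≤ n) (ε : Fin n → ℕ)
    (hε : ∀ i : Fin n, ε i = if (i : ℕ) < l then 1 else 0) (π : Equiv.Perm (Fin n)) :
    majBZ (fun i => ε (π i)) π = majS (rhoP l * π) ∧
      desBZ (fun i => ε (π i)) π = desS (rhoP l * π) + chiS l (rhoP l * π) := by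
  have hdisj : Disjoint (if chiS l (rhoP l * π) = 1 then ({0} : Finset ℕ) else ∅)
      (ordDes (rhoP l * π)) := by
    rw [Finset.disjoint_left]
    intro a ha hb
    have hb' := (mem_ordDes _ a).mp hb
    split at ha
    · rw [Finset.mem_singleton] at ha; omega
    · exact absurd ha (Finset.notMem_empty _)
  constructor
  · rw [majBZ, bz_desSet l hn hl ε hε π, Finset.sum_union hdisj]
    rcases chiS_cases l (rhoP l * π) with h | h <;> rw [h] <;> simp [majS]
  · rw [desBZ, bz_desSet l hn hl ε hε π, Finset.card_union_of_disjoint hdisj]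
    rcases chiS_cases l (rhoP l * π) with h | h <;> rw [h] <;> simp [desS] <;> omega

theorem cone_generating_function_for_initial_ones (r n : ℕ) (hr : 2 ≤ r) (hn : 1 ≤ n)
    (l : ℕ) (hl : l ≤ n) (ε : Fin n → ℕ)
    (hε : ∀ i : Fin n, ε i = if (i : ℕ) < l then 1 else 0) :
    (PowerSeries.mk fun k => ∑ v ∈ Lset ε k, ∏ i, mPrime (v i) k) *
        ∏ j ∈ Finset.range (n + 1),
          (1 - PowerSeries.C (R := MvPolynomial (Fin 2) ℤ) (qP ^ j) * PowerSeries.X) =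
      ∑ π : Equiv.Perm (Fin n),
        PowerSeries.C (R := MvPolynomial (Fin 2) ℤ)
            (qP ^ majBZ (fun i => ε (π i)) π * uP ^ l) *
          PowerSeries.X ^ desBZ (fun i => ε (π i)) π := by
  have hQ := main_identity n l (n - l) (by omega)
  have hL : (PowerSeries.mk fun k => ∑ v ∈ Lset ε k, ∏ i, mPrime (v i) k)
      = PowerSeries.C (R := Rbz) (uP ^ l) * Gs l (n - l) := by
    apply PowerSeries.ext; intro k
    rw [PowerSeries.coeff_C_mul, Gs, PowerSeries.coeff_mk, PowerSeries.coeff_mk]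
    exact coeff_lemma n l hl ε hε k
  have hPs : (∏ j ∈ Finset.range (n + 1),
      (1 - PowerSeries.C (R := MvPolynomial (Fin 2) ℤ) (qP ^ j) * PowerSeries.X)) = Ps n := rfl
  rw [hPs, hL, mul_assoc, hQ, Qs, Finset.mul_sum]
  refine (Fintype.sum_bijective (fun π : Equiv.Perm (Fin n) => rhoP l * π)
    (Equiv.mulLeft (rhoP l : Equiv.Perm (Fin n))).bijective _ _ ?_).symm
  intro π
  obtain ⟨hmaj, hdes⟩ := bz_stats l hn hl ε hε π
  rw [hmaj, hdes, map_mul]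
  ring
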